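/- Let α > β > 0 and Φ(s) = √(α²cos²s + β²sin²s). Then ∫₀^{2π} (1/4)|sin(s-t)| · (α²β²/Φ(t)³) dt = Φ(s) for all s. -/

import Mathlib

open Real MeasureTheory intervalIntegral

/-- `α²β² K * Φ⁻³ = Φ` for the elliptical orbit length `Φ`, where
`K(s) = |sin s|/4`. -/
theorem kernel_convolution_ellipse
    (α β : ℝ) (hβ : 0 < β) (hαβ : β < α) (Φ : ℝ → ℝ)
    (hΦ : Φ = fun s => Real.sqrt (α ^ 2 * cos s ^ 2 + β ^ 2 * sin s ^ 2)) :
    ∀ s : ℝ,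
      (∫ t in (0:ℝ)..(2 * π), (1/4) * |sin (s - t)| * (α ^ 2 * β ^ 2 / (Φ t) ^ 3)) =
        Φ s := by
  intro s
  have hα : 0 < α := hβ.trans hαβ
  set Q : ℝ → ℝ := fun t => α ^ 2 * cos t ^ 2 + β ^ 2 * sin t ^ 2 with hQ
  have hQpos : ∀ t, 0 < Q t := by
    intro t
    show 0 < α ^ 2 * cos t ^ 2 + β ^ 2 * sin t ^ 2
    have h1 := sin_sq_add_cos_sq t
    have h2 : β ^ 2 < α ^ 2 := by nlinarith
    nlinarith [sq_nonneg (cos t), sq_nonneg (sin t), sq_nonneg β]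
  have hΦpos : ∀ t, 0 < Φ t := by
    intro t; rw [hΦ]; exact Real.sqrt_pos.mpr (hQpos t)
  have hΦsq : ∀ t, Φ t ^ 2 = Q t := by
    intro t; rw [hΦ]; exact Real.sq_sqrt (hQpos t).le
  -- derivative of Φ
  have hQd : ∀ t, HasDerivAt Q (2 * ((β ^ 2 - α ^ 2) * sin t * cos t)) t := by
    intro t
    have h1 : HasDerivAt (fun t => α ^ 2 * cos t ^ 2 + β ^ 2 * sin t ^ 2)
        (α ^ 2 * (2 * cos t ^ 1 * (-sin t)) + β ^ 2 * (2 * sin t ^ 1 * cos t)) t :=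
      (((Real.hasDerivAt_cos t).pow 2).const_mul (α ^ 2)).add
        (((Real.hasDerivAt_sin t).pow 2).const_mul (β ^ 2))
    convert h1 using 1
    ring
  have hΦder : ∀ t, HasDerivAt Φ ((β ^ 2 - α ^ 2) * sin t * cos t / Φ t) t := by
    intro t
    have h2 := (hQd t).sqrt (hQpos t).ne'
    have h3 : (fun y => Real.sqrt (Q y)) = Φ := by rw [hΦ]
    rw [h3] at h2
    have h5 : Real.sqrt (Q t) = Φ t := congrFun h3 t
    convert h2 using 1
    rw [h5]
    have := (hΦpos t).ne'
    field_simp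
  -- the antiderivative g
  set g : ℝ → ℝ := fun t => (β ^ 2 * sin s * sin t + α ^ 2 * cos s * cos t) / Φ t with hg
  have hgd : ∀ t, HasDerivAt g (α ^ 2 * β ^ 2 * sin (s - t) / Φ t ^ 3) t := by
    intro t
    have hN : HasDerivAt (fun t => β ^ 2 * sin s * sin t + α ^ 2 * cos s * cos t)
        (β ^ 2 * sin s * cos t + α ^ 2 * cos s * (-sin t)) t :=
      ((Real.hasDerivAt_sin t).const_mul (β ^ 2 * sin s)).add
        ((Real.hasDerivAt_cos t).const_mul (α ^ 2 * cos s))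
    have h4 : HasDerivAt g _ t := hN.div (hΦder t) (hΦpos t).ne'
    convert h4 using 1
    have hP := (hΦpos t).ne'
    have hsq : Φ t ^ 2 = α ^ 2 * cos t ^ 2 + β ^ 2 * sin t ^ 2 := hΦsq t
    rw [sin_sub]
    field_simp
    linear_combination (-(1 : ℝ) * (α ^ 2 * β ^ 2 * (sin s * cos t - cos s * sin t))) *
        (sin_sq_add_cos_sq t) +
      (-(1 : ℝ) * (β ^ 2 * sin s * cos t - α ^ 2 * cos s * sin t)) * hsq
  -- continuity
  have hΦcont : Continuous Φ := by
    rw [hΦ]; fun_prop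
  have hfc : Continuous fun t => (1/4 : ℝ) * |sin (s - t)| * (α ^ 2 * β ^ 2 / Φ t ^ 3) := by
    apply Continuous.mul
    · exact continuous_const.mul
        (Real.continuous_sin.comp (continuous_const.sub continuous_id)).abs
    · exact continuous_const.div (hΦcont.pow 3) fun t => pow_ne_zero 3 (hΦpos t).ne'
  have hdc : Continuous fun t => α ^ 2 * β ^ 2 * sin (s - t) / Φ t ^ 3 := by
    apply Continuous.div
    · exact continuous_const.mul (Real.continuous_sin.comp (continuous_const.sub continuous_id))
    · exact hΦcont.pow 3
    · exact fun t => pow_ne_zero 3 (hΦpos t).ne'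
  -- periodicity
  have hΦper : ∀ t, Φ (t + 2 * π) = Φ t := by
    intro t; rw [hΦ]; simp [Real.cos_add_two_pi, Real.sin_add_two_pi]
  have hper : Function.Periodic
      (fun t => (1/4 : ℝ) * |sin (s - t)| * (α ^ 2 * β ^ 2 / Φ t ^ 3)) (2 * π) := by
    intro t
    have h5 : sin (s - (t + 2 * π)) = sin (s - t) := by
      rw [show s - (t + 2 * π) = (s - t) - 2 * π by ring, Real.sin_sub_two_pi]
    simp only [h5, hΦper t]
  -- shift the integral
  have hshift : (∫ t in (0:ℝ)..(2 * π), (1/4 : ℝ) * |sin (s - t)| * (α ^ 2 * β ^ 2 / Φ t ^ 3))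
      = ∫ t in s..(s + 2 * π), (1/4 : ℝ) * |sin (s - t)| * (α ^ 2 * β ^ 2 / Φ t ^ 3) := by
    have := hper.intervalIntegral_add_eq 0 s
    simpa using this
  rw [show (∫ t in (0:ℝ)..(2 * π), (1/4) * |sin (s - t)| * (α ^ 2 * β ^ 2 / (Φ t) ^ 3))
      = ∫ t in (0:ℝ)..(2 * π), (1/4 : ℝ) * |sin (s - t)| * (α ^ 2 * β ^ 2 / Φ t ^ 3) from rfl,
    hshift]
  -- split
  have hsplit : (∫ t in s..(s + 2 * π), (1/4 : ℝ) * |sin (s - t)| * (α ^ 2 * β ^ 2 / Φ t ^ 3))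
      = (∫ t in s..(s + π), (1/4 : ℝ) * |sin (s - t)| * (α ^ 2 * β ^ 2 / Φ t ^ 3))
        + ∫ t in (s + π)..(s + 2 * π), (1/4 : ℝ) * |sin (s - t)| * (α ^ 2 * β ^ 2 / Φ t ^ 3) := by
    rw [integral_add_adjacent_intervals (hfc.intervalIntegrable _ _) (hfc.intervalIntegrable _ _)]
  rw [hsplit]
  have hπ := Real.pi_pos
  -- first interval: |sin (s - t)| = - sin (s - t)
  have h1 : (∫ t in s..(s + π), (1/4 : ℝ) * |sin (s - t)| * (α ^ 2 * β ^ 2 / Φ t ^ 3))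
      = -(1/4 : ℝ) * g (s + π) - (-(1/4 : ℝ) * g s) := by
    have hcongr : (∫ t in s..(s + π), (1/4 : ℝ) * |sin (s - t)| * (α ^ 2 * β ^ 2 / Φ t ^ 3))
        = ∫ t in s..(s + π), -(1/4 : ℝ) * (α ^ 2 * β ^ 2 * sin (s - t) / Φ t ^ 3) := by
      apply intervalIntegral.integral_congr
      intro t ht
      rw [Set.uIcc_of_le (by linarith)] at ht
      dsimp only
      have h6 : sin (s - t) ≤ 0 := by
        have : sin (t - s) ≥ 0 := sin_nonneg_of_nonneg_of_le_pi (by linarith [ht.1]) (by linarith [ht.2])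
        have h7 : sin (s - t) = - sin (t - s) := by
          rw [show s - t = -(t - s) by ring, Real.sin_neg]
        linarith
      rw [abs_of_nonpos h6]
      field_simp
    rw [hcongr]
    exact intervalIntegral.integral_eq_sub_of_hasDerivAt
      (fun t _ => ((hgd t).const_mul (-(1/4 : ℝ))))
      ((continuous_const.mul hdc).intervalIntegrable _ _)
  -- second interval: |sin (s - t)| = sin (s - t)
  have h2 : (∫ t in (s + π)..(s + 2 * π), (1/4 : ℝ) * |sin (s - t)| * (α ^ 2 * β ^ 2 / Φ t ^ 3))
      = (1/4 : ℝ) * g (s + 2 * π) - (1/4 : ℝ) * g (s + π) := by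
    have hcongr : (∫ t in (s + π)..(s + 2 * π), (1/4 : ℝ) * |sin (s - t)| * (α ^ 2 * β ^ 2 / Φ t ^ 3))
        = ∫ t in (s + π)..(s + 2 * π), (1/4 : ℝ) * (α ^ 2 * β ^ 2 * sin (s - t) / Φ t ^ 3) := by
      apply intervalIntegral.integral_congr
      intro t ht
      rw [Set.uIcc_of_le (by linarith)] at ht
      dsimp only
      have h6 : sin (s - t) ≥ 0 := by
        have h8 : sin (s - t) = sin (s - t + 2 * π) := (Real.sin_add_two_pi _).symm
        rw [h8]
        exact sin_nonneg_of_nonneg_of_le_pi (by linarith [ht.2]) (by linarith [ht.1])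
      rw [abs_of_nonneg h6]
      field_simp
    rw [hcongr]
    exact intervalIntegral.integral_eq_sub_of_hasDerivAt
      (fun t _ => ((hgd t).const_mul ((1/4 : ℝ))))
      ((continuous_const.mul hdc).intervalIntegrable _ _)
  rw [h1, h2]
  -- evaluate g at s, s + π, s + 2π
  have hgs : g s = Φ s := by
    rw [hg]
    simp only
    rw [div_eq_iff (hΦpos s).ne']
    have hsq : Φ s ^ 2 = α ^ 2 * cos s ^ 2 + β ^ 2 * sin s ^ 2 := hΦsq s
    linear_combination -hsq
  have hΦpi : Φ (s + π) = Φ s := by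
    rw [hΦ]; simp only
    rw [Real.sin_add_pi, Real.cos_add_pi]
    ring_nf
  have hgpi : g (s + π) = - g s := by
    rw [hg]; simp only
    rw [Real.sin_add_pi, Real.cos_add_pi, hΦpi]
    ring
  have hg2pi : g (s + 2 * π) = g s := by
    rw [hg]; simp only
    rw [Real.sin_add_two_pi, Real.cos_add_two_pi, hΦper]
  rw [hgpi, hg2pi, hgs]
  ring
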